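/- Let N(t) be a Poisson process with rate λ, let q be a positive integer, T > 0, and let τ_q be the first time N reaches q. Then E[∫₀^{τ_q ∧ T} N(t) dt] = E[Y_q(Y_q - 1)]/(2λ), where Y_q = min(Y, q) and Y ~ Poisson(λT). -/

import Mathlib

open MeasureTheory ProbabilityTheory
open scoped NNReal ENNReal

/-- A Poisson (counting) process with rate `lam`, indexed by nonnegative real times:
`N 0 = 0`, paths are monotone and right-continuous (piecewise constant between jumps),
increments are independent, and the increment over `[s, t]` is Poisson with mean
`lam * (t - s)`. -/
structure PoissonProcess (Ω : Type*) [MeasurableSpace Ω] (P : Measure Ω) (lam : ℝ≥0) where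
  N : ℝ≥0 → Ω → ℕ
  measurable_N : ∀ t, Measurable (N t)
  init : ∀ ω, N 0 ω = 0
  mono : ∀ ω, Monotone fun t => N t ω
  right_continuous : ∀ ω t, ∃ ε : ℝ≥0, 0 < ε ∧ ∀ s ∈ Set.Ico t (t + ε), N s ω = N t ω
  stationary : ∀ s t : ℝ≥0, s ≤ t →
    P.map (fun ω => N t ω - N s ω) = poissonMeasure (lam * (t - s))
  indep : ∀ (n : ℕ) (t : ℕ → ℝ≥0), Monotone t →
    iIndepFun
      (fun i : Fin n => fun ω => N (t (i + 1)) ω - N (t i) ω) P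

/-- The first hitting time of level `q` by the process (the `q`-th arrival time). -/
noncomputable def PoissonProcess.hit {Ω : Type*} [MeasurableSpace Ω]
    {P : Measure Ω} {lam : ℝ≥0} (pp : PoissonProcess Ω P lam) (q : ℕ) (ω : Ω) : ℝ≥0 :=
  sInf {t : ℝ≥0 | q ≤ pp.N t ω}

namespace PoissonProcess

variable {Ω : Type*} [MeasurableSpace Ω] {P : Measure Ω} {lam : ℝ≥0}
  (pp : PoissonProcess Ω P lam)

/-- law of N t -/
lemma law (t : ℝ≥0) : P.map (pp.N t) = poissonMeasure (lam * t) := by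
  have h := pp.stationary 0 t zero_le
  simpa [pp.init, tsub_zero] using h

/-- joint measurability -/
lemma measurable_joint : Measurable (fun z : Ω × ℝ≥0 => pp.N z.2 z.1) := by
  have hL : ∀ j : ℕ, MeasurableSet {z : Ω × ℝ≥0 | pp.N z.2 z.1 ≤ j} := by
    intro j
    have hset : {z : Ω × ℝ≥0 | pp.N z.2 z.1 ≤ j}
        = ⋃ r : ℚ, ({ω | pp.N (Real.toNNReal r) ω ≤ j} ×ˢ Set.Iic (Real.toNNReal r)) := by
      ext z
      simp only [Set.mem_setOf_eq, Set.mem_iUnion, Set.mem_prod, Set.mem_Iic]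
      constructor
      · intro h
        obtain ⟨ε, hε, hconst⟩ := pp.right_continuous z.1 z.2
        have hlt : (z.2 : ℝ) < ((z.2 + ε : ℝ≥0) : ℝ) := by
          exact_mod_cast lt_add_of_pos_right z.2 hε
        obtain ⟨r, hr1, hr2⟩ := exists_rat_btwn hlt
        have h1 : z.2 ≤ Real.toNNReal r := by
          rw [Real.le_toNNReal_iff_coe_le (le_trans z.2.coe_nonneg hr1.le)]
          exact hr1.le
        have h2 : Real.toNNReal r < z.2 + ε := by
          rw [Real.toNNReal_lt_iff_lt_coe (le_trans z.2.coe_nonneg hr1.le)]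
          exact hr2
        refine ⟨r, ?_, h1⟩
        rw [hconst _ ⟨h1, h2⟩]
        exact h
      · rintro ⟨r, hr, hle⟩
        exact le_trans (pp.mono z.1 hle) hr
    rw [hset]
    exact MeasurableSet.iUnion fun r =>
      ((pp.measurable_N _ measurableSet_Iic).prod measurableSet_Iic)
  apply measurable_to_countable'
  intro k
  rcases k with _ | m
  · have : (fun z : Ω × ℝ≥0 => pp.N z.2 z.1) ⁻¹' {0} = {z : Ω × ℝ≥0 | pp.N z.2 z.1 ≤ 0} := by
      ext z; simp [Nat.le_zero]
    rw [this]; exact hL 0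
  · have : (fun z : Ω × ℝ≥0 => pp.N z.2 z.1) ⁻¹' {m+1}
        = {z : Ω × ℝ≥0 | pp.N z.2 z.1 ≤ m+1} \ {z : Ω × ℝ≥0 | pp.N z.2 z.1 ≤ m} := by
      ext z
      simp only [Set.mem_preimage, Set.mem_singleton_iff, Set.mem_diff, Set.mem_setOf_eq]
      omega
    rw [this]; exact (hL (m+1)).diff (hL m)

lemma measurableSet_nat (s : Set ℕ) : MeasurableSet s := (Set.to_countable s).measurableSet

lemma null_never [IsProbabilityMeasure P] (hlam : 0 < lam) (q : ℕ) (hq : 1 ≤ q) :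
    P (⋂ m : ℕ, {ω | pp.N (m : ℝ≥0) ω < q}) = 0 := by
  set D := ⋂ m : ℕ, {ω | pp.N (m : ℝ≥0) ω < q} with hD
  have hbound : ∀ m : ℕ,
      P D ≤ ∑ k ∈ Finset.range q, ENNReal.ofReal (poissonPMFReal (lam * m) k) := by
    intro m
    have h1 : P D ≤ P {ω | pp.N (m : ℝ≥0) ω < q} :=
      measure_mono (Set.iInter_subset _ m)
    have h2 : P {ω | pp.N (m : ℝ≥0) ω < q}
        = (P.map (pp.N (m : ℝ≥0))) {n : ℕ | n < q} := by
      rw [Measure.map_apply (pp.measurable_N _) (measurableSet_nat _)]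
      rfl
    have h3 : ({n : ℕ | n < q} : Set ℕ) = ↑(Finset.range q) := by ext n; simp
    rw [h2, pp.law, h3, ← sum_measure_singleton] at h1
    simp only [poissonMeasure_singleton] at h1
    exact h1
  have htend : Filter.Tendsto
      (fun m : ℕ => ∑ k ∈ Finset.range q, ENNReal.ofReal (poissonPMFReal (lam * m) k))
      Filter.atTop (nhds 0) := by
    have hzero : (0 : ℝ≥0∞) = ∑ _k ∈ Finset.range q, (0 : ℝ≥0∞) := by simp
    rw [hzero]
    refine tendsto_finset_sum _ fun k _ => ?_
    have hx : Filter.Tendsto (fun m : ℕ => ((lam * m : ℝ≥0) : ℝ)) Filter.atTop Filter.atTop := by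
      have : Filter.Tendsto (fun m : ℕ => (lam : ℝ) * m) Filter.atTop Filter.atTop :=
        tendsto_natCast_atTop_atTop.const_mul_atTop (by exact_mod_cast hlam)
      refine this.congr fun m => ?_
      push_cast; ring
    have hy : Filter.Tendsto (fun x : ℝ => x ^ k * Real.exp (-x) / (k.factorial : ℝ))
        Filter.atTop (nhds 0) := by
      simpa using (Real.tendsto_pow_mul_exp_neg_atTop_nhds_zero k).div_const (k.factorial : ℝ)
    have := (hy.comp hx)
    have hcong : Filter.Tendsto (fun m : ℕ => poissonPMFReal (lam * m) k)
        Filter.atTop (nhds 0) := by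
      refine this.congr fun m => ?_
      simp only [Function.comp_apply, poissonPMFReal]
      ring
    have := (ENNReal.tendsto_ofReal hcong)
    simpa using this
  have : P D ≤ 0 := ge_of_tendsto' htend hbound
  exact le_antisymm this zero_le

lemma null_jump [IsProbabilityMeasure P] (q : ℕ) (u : ℝ≥0) (hu : 0 < u) :
    P {ω | q ≤ pp.N u ω ∧
        ∀ r : ℚ, 0 ≤ (r:ℝ) → (r:ℝ) < (u:ℝ) → pp.N (Real.toNNReal (r:ℝ)) ω < q} = 0 := by
  set A := {ω | q ≤ pp.N u ω ∧
      ∀ r : ℚ, 0 ≤ (r:ℝ) → (r:ℝ) < (u:ℝ) → pp.N (Real.toNNReal (r:ℝ)) ω < q} with hA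
  have key : ∀ δ : ℝ≥0, 0 < δ → δ ≤ u → P A ≤ ENNReal.ofReal ((lam : ℝ) * (δ : ℝ)) := by
    intro δ hδ hδu
    have hsub : A ⊆ {ω | 1 ≤ pp.N u ω - pp.N (u - δ) ω} := by
      rintro ω ⟨h1, h2⟩
      have hlt : ((u - δ : ℝ≥0) : ℝ) < (u : ℝ) := by
        exact_mod_cast tsub_lt_self hu hδ
      obtain ⟨r, hr1, hr2⟩ := exists_rat_btwn hlt
      have hr0 : 0 ≤ (r:ℝ) := le_trans (u - δ).coe_nonneg hr1.le
      have hNr : pp.N (Real.toNNReal (r:ℝ)) ω < q := h2 r hr0 hr2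
      have hmono : pp.N (u - δ) ω ≤ pp.N (Real.toNNReal (r:ℝ)) ω :=
        pp.mono ω (by rw [Real.le_toNNReal_iff_coe_le hr0]; exact hr1.le)
      have hlow : pp.N (u - δ) ω < q := lt_of_le_of_lt hmono hNr
      simp only [Set.mem_setOf_eq]
      omega
    have hmeas : Measurable (fun ω => pp.N u ω - pp.N (u - δ) ω) := by
      have : Measurable (fun ω => (pp.N u ω, pp.N (u - δ) ω)) :=
        (pp.measurable_N u).prodMk (pp.measurable_N (u - δ))
      exact (measurable_of_countable (fun p : ℕ × ℕ => p.1 - p.2)).comp this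
    have h1 : P A ≤ (P.map (fun ω => pp.N u ω - pp.N (u - δ) ω)) {n : ℕ | 1 ≤ n} := by
      rw [Measure.map_apply hmeas (measurableSet_nat _)]
      exact measure_mono hsub
    rw [pp.stationary (u - δ) u tsub_le_self, tsub_tsub_cancel_of_le hδu] at h1
    have h2 : (poissonMeasure (lam * δ)) {n : ℕ | 1 ≤ n}
        ≤ ENNReal.ofReal ((lam : ℝ) * (δ : ℝ)) := by
      have hc : ({n : ℕ | 1 ≤ n} : Set ℕ) = ({0} : Set ℕ)ᶜ := by
        ext n; simp [Nat.one_le_iff_ne_zero]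
      have h0 : (poissonMeasure (lam * δ)) {0}
          = ENNReal.ofReal (Real.exp (-((lam * δ : ℝ≥0) : ℝ))) := by
        rw [poissonMeasure_singleton]
        simp
      rw [hc, measure_compl (measurableSet_nat _) (measure_ne_top _ _), measure_univ, h0]
      rw [tsub_le_iff_right, ← ENNReal.ofReal_add (by positivity) (Real.exp_nonneg _)]
      rw [show (1:ℝ≥0∞) = ENNReal.ofReal 1 by simp]
      apply ENNReal.ofReal_le_ofReal
      have := Real.add_one_le_exp (-((lam * δ : ℝ≥0) : ℝ))
      have hcoe : ((lam * δ : ℝ≥0) : ℝ) = (lam : ℝ) * (δ : ℝ) := by push_cast; ring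
      rw [hcoe] at this ⊢
      linarith
    exact le_trans h1 h2
  have htend : Filter.Tendsto (fun m : ℕ => ENNReal.ofReal ((lam : ℝ) * ((u / (m+1) : ℝ≥0) : ℝ)))
      Filter.atTop (nhds 0) := by
    have hreal : Filter.Tendsto (fun m : ℕ => (lam : ℝ) * ((u / (m+1) : ℝ≥0) : ℝ))
        Filter.atTop (nhds 0) := by
      have hbase : Filter.Tendsto (fun n : ℕ => ((lam : ℝ) * (u:ℝ)) / n)
          Filter.atTop (nhds 0) := tendsto_const_div_atTop_nhds_zero_nat _
      have := hbase.comp (Filter.tendsto_add_atTop_nat 1)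
      refine this.congr fun m => ?_
      simp only [Function.comp_apply]
      push_cast
      rw [mul_div_assoc]
    have := ENNReal.tendsto_ofReal hreal
    simpa using this
  have hle : P A ≤ 0 := by
    refine ge_of_tendsto' htend fun m => ?_
    refine key (u / (m+1)) ?_ ?_
    · positivity
    · exact div_le_self zero_le (by exact_mod_cast Nat.le_add_left 1 m)
  exact le_antisymm hle zero_le

end PoissonProcess

open MeasureTheory ProbabilityTheory Real
open scoped NNReal ENNReal

noncomputable def ptilde (l : ℝ) (n : ℕ) (u : ℝ) : ℝ :=
  Real.exp (-(l*u)) * (l*u)^n / (n.factorial : ℝ)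

lemma continuous_ptilde (l : ℝ) (n : ℕ) : Continuous (ptilde l n) := by
  unfold ptilde; fun_prop

lemma hasDerivAt_ptilde (l : ℝ) (n : ℕ) (u : ℝ) :
    HasDerivAt (ptilde l n)
      ((Real.exp (-(l*u)) * ((n:ℝ) * (l*u)^(n-1) * l) + (-l * Real.exp (-(l*u))) * (l*u)^n)
        / (n.factorial : ℝ)) u := by
  have d1 : HasDerivAt (fun u : ℝ => l*u) l u := by
    simpa using (hasDerivAt_id u).const_mul l
  have he : HasDerivAt (fun u : ℝ => Real.exp (-(l*u))) (Real.exp (-(l*u)) * (-l)) u :=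
    d1.neg.exp
  have hp : HasDerivAt (fun u : ℝ => (l*u)^n) ((n:ℝ) * (l*u)^(n-1) * l) u := d1.pow n
  have := (he.mul hp).div_const (n.factorial : ℝ)
  exact this.congr_deriv (by ring)

lemma ptilde_zero (l : ℝ) (n : ℕ) : ptilde l n 0 = if n = 0 then 1 else 0 := by
  rcases n with _ | m <;> simp [ptilde, zero_pow]

lemma fact_ne' (n : ℕ) : (n.factorial : ℝ) ≠ 0 := Nat.cast_ne_zero.mpr n.factorial_ne_zero

-- key algebraic identity
lemma key_sum (q' : ℕ) (l E x : ℝ) :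
    ∑ n ∈ Finset.range (q'+1),
      (((n:ℝ) * ((n:ℝ)-1) - ((q':ℝ)+1) * (q':ℝ)) *
        ((E * ((n:ℝ) * x^(n-1) * l) + (-l * E) * x^n) / (n.factorial : ℝ)))
      = 2 * l * ∑ n ∈ Finset.range (q'+1), (E * x^n / (n.factorial : ℝ)) * (n:ℝ) := by
  set c : ℕ → ℝ := fun n => (n:ℝ) * ((n:ℝ)-1) - ((q':ℝ)+1) * (q':ℝ) with hc
  have split : ∀ n ∈ Finset.range (q'+1),
      c n * ((E * ((n:ℝ) * x^(n-1) * l) + (-l * E) * x^n) / (n.factorial : ℝ))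
      = (E*l) * (c n * ((n:ℝ) * x^(n-1) / (n.factorial : ℝ)))
        - (E*l) * (c n * (x^n / (n.factorial : ℝ))) := by
    intro n _
    field_simp
    ring
  rw [Finset.sum_congr rfl split, Finset.sum_sub_distrib, ← Finset.mul_sum, ← Finset.mul_sum]
  have h1 : ∑ n ∈ Finset.range (q'+1), (c n * ((n:ℝ) * x^(n-1) / (n.factorial : ℝ)))
      = ∑ i ∈ Finset.range q', c (i+1) * (x^i / (i.factorial : ℝ)) := by
    rw [Finset.sum_range_succ']
    norm_num
    refine Finset.sum_congr rfl fun i _ => ?_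
    have hfs : ((i+1).factorial : ℝ) = ((i:ℝ)+1) * (i.factorial : ℝ) := by
      rw [Nat.factorial_succ]; push_cast; ring
    rw [hfs]
    have := fact_ne' i
    have hi : (i:ℝ)+1 ≠ 0 := by positivity
    field_simp
  rw [h1, Finset.sum_range_succ (fun n => c n * (x^n / (n.factorial : ℝ))),
    Finset.sum_range_succ (fun n => (E * x^n / (n.factorial : ℝ)) * (n:ℝ))]
  simp only [mul_add]
  rw [Finset.mul_sum, Finset.mul_sum, Finset.mul_sum, sub_add_eq_sub_sub,
    ← Finset.sum_sub_distrib]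
  have hterm : ∀ i ∈ Finset.range q',
      (E*l) * (c (i+1) * (x^i / (i.factorial : ℝ))) - (E*l) * (c i * (x^i / (i.factorial : ℝ)))
      = 2 * l * ((E * x^i / (i.factorial : ℝ)) * (i:ℝ)) := by
    intro i _
    have hci : c (i+1) - c i = 2 * i := by rw [hc]; push_cast; ring
    rw [← mul_sub, ← sub_mul, hci]
    field_simp
  rw [Finset.sum_congr rfl hterm, sub_eq_add_neg]
  have hcq : c q' = -2 * q' := by rw [hc]; push_cast; ring
  congr 1
  rw [hcq]
  field_simp


lemma ftc_poisson (l : ℝ) (hl : 0 < l) (q' : ℕ) (T : ℝ) (hT : 0 ≤ T) :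
    ∫ u in Set.Ioc (0:ℝ) T, (∑ n ∈ Finset.range (q'+1), ptilde l n u * (n:ℝ))
      = (((q':ℝ)+1)*(q':ℝ) + ∑ n ∈ Finset.range (q'+1),
          (((n:ℝ)*((n:ℝ)-1) - ((q':ℝ)+1)*(q':ℝ)) * ptilde l n T)) / (2*l) := by
  set c : ℕ → ℝ := fun n => (n:ℝ) * ((n:ℝ)-1) - ((q':ℝ)+1) * (q':ℝ) with hc
  set G : ℝ → ℝ := fun u => ∑ n ∈ Finset.range (q'+1), ptilde l n u * (n:ℝ) with hG
  set H : ℝ → ℝ := fun u => (((q':ℝ)+1)*(q':ℝ)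
      + ∑ n ∈ Finset.range (q'+1), c n * ptilde l n u) / (2*l) with hH
  have hderiv : ∀ u : ℝ, HasDerivAt H (G u) u := by
    intro u
    have hsum : HasDerivAt (fun u => ∑ n ∈ Finset.range (q'+1), c n * ptilde l n u)
        (∑ n ∈ Finset.range (q'+1), c n *
          ((Real.exp (-(l*u)) * ((n:ℝ) * (l*u)^(n-1) * l) + (-l * Real.exp (-(l*u))) * (l*u)^n)
            / (n.factorial : ℝ))) u := by
      refine HasDerivAt.fun_sum fun n _ => ?_
      exact (hasDerivAt_ptilde l n u).const_mul (c n)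
    have h2 := (hsum.const_add (((q':ℝ)+1)*(q':ℝ))).div_const (2*l)
    have hkey := key_sum q' l (Real.exp (-(l*u))) (l*u)
    rw [hc] at *
    refine h2.congr_deriv (Eq.symm ?_)
    beta_reduce
    rw [hkey]
    have h2l : (2*l) ≠ 0 := by positivity
    field_simp [hG]
    refine Finset.sum_congr rfl fun n _ => ?_
    unfold ptilde
    ring
  have hGc : Continuous G := by
    rw [hG]
    exact continuous_finset_sum _ fun n _ => (continuous_ptilde l n).mul continuous_const
  have h1 : ∫ u in Set.Ioc (0:ℝ) T, G u = ∫ u in (0:ℝ)..T, G u :=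
    (intervalIntegral.integral_of_le hT).symm
  rw [hG] at h1
  rw [h1, intervalIntegral.integral_eq_sub_of_hasDerivAt (fun u _ => hderiv u)
    ((hGc.intervalIntegrable 0 T))]
  have hH0 : H 0 = 0 := by
    have hs : ∑ n ∈ Finset.range (q'+1), c n * ptilde l n 0 = c 0 := by
      rw [Finset.sum_eq_single_of_mem 0 (Finset.mem_range.mpr (by omega))]
      · simp [ptilde_zero]
      · intro b _ hb; simp [ptilde_zero, hb]
    show (((q':ℝ) + 1) * (q':ℝ) + ∑ n ∈ Finset.range (q' + 1), c n * ptilde l n 0) / (2 * l) = 0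
    rw [hs, hc]; norm_num
  rw [hH0, sub_zero]

open MeasureTheory ProbabilityTheory Real
open scoped NNReal ENNReal

lemma descFactorial_two_cast (n : ℕ) : ((n.descFactorial 2 : ℕ) : ℝ) = n * ((n:ℝ) - 1) := by
  rcases n with _ | m
  · simp
  · simp only [Nat.descFactorial]
    push_cast [Nat.descFactorial]
    ring

lemma tsum_trunc (r : ℝ≥0) (q : ℕ) :
    ∑' n : ℕ, poissonPMFReal r n * ((min n q).descFactorial 2 : ℕ)
     = (q:ℝ)*((q:ℝ)-1)
       + ∑ n ∈ Finset.range q, (((n:ℝ)*((n:ℝ)-1) - (q:ℝ)*((q:ℝ)-1)) * poissonPMFReal r n) := by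
  have h1 : HasSum (fun n : ℕ => poissonPMFReal r n * ((q.descFactorial 2 : ℕ):ℝ))
      (1 * ((q.descFactorial 2 : ℕ):ℝ)) := (poissonPMFRealSum r).mul_right _
  set g : ℕ → ℝ := fun n =>
    poissonPMFReal r n * (((min n q).descFactorial 2 : ℕ) - ((q.descFactorial 2 : ℕ):ℝ)) with hg
  have hgz : ∀ n ∉ Finset.range q, g n = 0 := by
    intro n hn
    have hqn : q ≤ n := le_of_not_gt (fun h => hn (Finset.mem_range.mpr h))
    have hmin : min n q = q := min_eq_right hqn
    rw [hg]
    simp only [hmin, sub_self, mul_zero]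
  have h2 : HasSum g (∑ n ∈ Finset.range q, g n) := hasSum_sum_of_ne_finset_zero hgz
  have hsplit : (fun n : ℕ => poissonPMFReal r n * ((min n q).descFactorial 2 : ℕ))
      = fun n => poissonPMFReal r n * ((q.descFactorial 2 : ℕ):ℝ) + g n := by
    funext n; rw [hg]; ring
  rw [hsplit, (h1.add h2).tsum_eq, one_mul, descFactorial_two_cast]
  congr 1
  refine Finset.sum_congr rfl fun n hn => ?_
  have : min n q = n := min_eq_left (Finset.mem_range.mp hn).le
  rw [hg]
  simp only [this]
  rw [descFactorial_two_cast, descFactorial_two_cast]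
  ring

lemma integral_poisson_trunc (r : ℝ≥0) (q : ℕ) :
    ∫ n, (if n < q then (n:ℝ) else 0) ∂(poissonMeasure r)
    = ∑ n ∈ Finset.range q, poissonPMFReal r n * (n:ℝ) := by
  have hg : Integrable (fun n : ℕ => if n < q then (n:ℝ) else 0) (poissonMeasure r) := by
    refine Integrable.mono' (integrable_const (q:ℝ)) ((measurable_from_nat).aestronglyMeasurable)
      (ae_of_all _ fun n => ?_)
    by_cases h : n < q
    · simp only [if_pos h, Real.norm_natCast]
      exact_mod_cast h.le
    · simp only [if_neg h, norm_zero]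
      positivity
  rw [integral_poissonMeasure]
  rw [tsum_eq_sum (s := Finset.range q) (by
    intro n hn
    have : ¬ n < q := fun h => hn (Finset.mem_range.mpr h)
    simp [this])]
  refine Finset.sum_congr rfl fun n hn => ?_
  have hlt : n < q := Finset.mem_range.mp hn
  rw [if_pos hlt, smul_eq_mul]
  rfl


/-- Let `N` be a Poisson process with rate `λ > 0`, `q` a positive integer, `T > 0`, and
`τ_q` the first hitting time of `q`. Then `E[∫₀^{τ_q ∧ T} N(t) dt] = E[Y_q (Y_q - 1)]/(2λ)`
where `Y_q = min(Y, q)` and `Y ~ Poisson(λT)`. -/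
theorem stmt11 {Ω : Type*} [MeasurableSpace Ω] (P : Measure Ω) [IsProbabilityMeasure P]
    (lam : ℝ≥0) (hlam : 0 < lam) (pp : PoissonProcess Ω P lam)
    (q : ℕ) (hq : 1 ≤ q) (T : ℝ≥0) (hT : 0 < T) :
    (∫ ω, (∫ u in Set.Ioc (0 : ℝ) ((min (pp.hit q ω) T : ℝ≥0) : ℝ),
        (pp.N u.toNNReal ω : ℝ)) ∂P) =
      (∑' n : ℕ, poissonPMFReal (lam * T) n * ((min n q).descFactorial 2 : ℝ)) / (2 * lam) := by
  classical
  set ν : Measure ℝ := volume.restrict (Set.Ioc (0:ℝ) (T:ℝ)) with hν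
  haveI hνfin : IsFiniteMeasure ν := by
    constructor
    rw [hν, Measure.restrict_apply_univ]
    exact measure_Ioc_lt_top
  set σ : Ω → ℝ := fun ω => ((min (pp.hit q ω) T : ℝ≥0) : ℝ) with hσ
  set F : Ω → ℝ → ℝ :=
    fun ω => (Set.Iic (σ ω)).indicator (fun u => (pp.N u.toNNReal ω : ℝ)) with hF
  set F' : Ω → ℝ → ℝ :=
    fun ω u => if pp.N u.toNNReal ω < q then (pp.N u.toNNReal ω : ℝ) else 0 with hF'
  -- step 1 : rewrite inner integral
  have step1 : ∀ ω, (∫ u in Set.Ioc (0 : ℝ) ((min (pp.hit q ω) T : ℝ≥0) : ℝ),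
      (pp.N u.toNNReal ω : ℝ)) = ∫ u, F ω u ∂ν := by
    intro ω
    have hσT : σ ω ≤ (T:ℝ) := by
      rw [hσ]
      exact_mod_cast (min_le_right (pp.hit q ω) T)
    have hset : Set.Iic (σ ω) ∩ Set.Ioc (0:ℝ) (T:ℝ) = Set.Ioc (0:ℝ) (σ ω) := by
      ext u
      simp only [Set.mem_inter_iff, Set.mem_Iic, Set.mem_Ioc]
      constructor
      · rintro ⟨h1, h2, h3⟩; exact ⟨h2, h1⟩
      · rintro ⟨h1, h2⟩; exact ⟨h2, h1, le_trans h2 hσT⟩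
    rw [hF]
    rw [integral_indicator measurableSet_Iic, Measure.restrict_restrict measurableSet_Iic, hset]
  rw [integral_congr_ae (Filter.Eventually.of_forall step1)]
  -- the exceptional sets
  set D₁ : Set Ω := ⋂ m : ℕ, {ω | pp.N (m : ℝ≥0) ω < q} with hD₁
  set D₂ : Set (Ω × ℝ) := {z | q ≤ pp.N z.2.toNNReal z.1 ∧
      ∀ r : ℚ, 0 ≤ (r:ℝ) → (r:ℝ) < z.2 → pp.N (Real.toNNReal (r:ℝ)) z.1 < q} with hD₂
  have hφ : Measurable (fun z : Ω × ℝ => pp.N z.2.toNNReal z.1) :=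
    pp.measurable_joint.comp (measurable_fst.prodMk
      (measurable_real_toNNReal.comp measurable_snd))
  have hD₂meas : MeasurableSet D₂ := by
    rw [hD₂]
    have h1 : MeasurableSet {z : Ω × ℝ | q ≤ pp.N z.2.toNNReal z.1} :=
      hφ (PoissonProcess.measurableSet_nat _)
    have h2 : MeasurableSet {z : Ω × ℝ |
        ∀ r : ℚ, 0 ≤ (r:ℝ) → (r:ℝ) < z.2 → pp.N (Real.toNNReal (r:ℝ)) z.1 < q} := by
      have : {z : Ω × ℝ | ∀ r : ℚ, 0 ≤ (r:ℝ) → (r:ℝ) < z.2 →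
          pp.N (Real.toNNReal (r:ℝ)) z.1 < q}
          = ⋂ r : ℚ, {z : Ω × ℝ | 0 ≤ (r:ℝ) → (r:ℝ) < z.2 →
              pp.N (Real.toNNReal (r:ℝ)) z.1 < q} := by
        ext z; simp
      rw [this]
      refine MeasurableSet.iInter fun r => ?_
      by_cases h0 : 0 ≤ (r:ℝ)
      · have heq : {z : Ω × ℝ | 0 ≤ (r:ℝ) → (r:ℝ) < z.2 →
            pp.N (Real.toNNReal (r:ℝ)) z.1 < q}
            = {z : Ω × ℝ | pp.N (Real.toNNReal (r:ℝ)) z.1 < q}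
              ∪ {z : Ω × ℝ | z.2 ≤ (r:ℝ)} := by
          ext z
          simp only [Set.mem_setOf_eq, Set.mem_union]
          constructor
          · intro h
            by_cases hz : (r:ℝ) < z.2
            · exact Or.inl (h h0 hz)
            · exact Or.inr (not_lt.mp hz)
          · rintro (h | h)
            · exact fun _ _ => h
            · intro _ hz; exact absurd h (not_le.mpr hz)
        rw [heq]
        refine MeasurableSet.union ?_ ?_
        · exact ((pp.measurable_N _).comp measurable_fst) (PoissonProcess.measurableSet_nat {n | n < q})
        · exact measurable_snd measurableSet_Iic
      · have heq : {z : Ω × ℝ | 0 ≤ (r:ℝ) → (r:ℝ) < z.2 →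
            pp.N (Real.toNNReal (r:ℝ)) z.1 < q} = Set.univ := by
          ext z; simp only [Set.mem_setOf_eq, Set.mem_univ, iff_true]
          intro h; exact absurd h h0
        rw [heq]; exact MeasurableSet.univ
    exact h1.inter h2
  have hD₁meas : MeasurableSet D₁ := by
    rw [hD₁]
    exact MeasurableSet.iInter fun m =>
      (pp.measurable_N _) (PoissonProcess.measurableSet_nat {n | n < q})
  have hD₁null : P D₁ = 0 := pp.null_never hlam q hq
  have hprodD₁ : (P.prod ν) (D₁ ×ˢ (Set.univ : Set ℝ)) = 0 := by
    rw [Measure.prod_prod, hD₁null, zero_mul]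
  have hprodD₂ : (P.prod ν) D₂ = 0 := by
    rw [Measure.prod_apply_symm hD₂meas]
    have hz : ∀ u ∈ Set.Ioc (0:ℝ) (T:ℝ), P ((fun ω => (ω, u)) ⁻¹' D₂) = 0 := by
      intro u hu
      have hu0 : (0:ℝ) < u := hu.1
      have hupos : 0 < u.toNNReal := Real.toNNReal_pos.mpr hu0
      have hcoe : ((u.toNNReal : ℝ≥0) : ℝ) = u := Real.coe_toNNReal u hu0.le
      have hpre : (fun ω => (ω, u)) ⁻¹' D₂
          = {ω | q ≤ pp.N u.toNNReal ω ∧ ∀ r : ℚ, 0 ≤ (r:ℝ) →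
              (r:ℝ) < ((u.toNNReal : ℝ≥0) : ℝ) → pp.N (Real.toNNReal (r:ℝ)) ω < q} := by
        rw [hD₂, hcoe]
        rfl
      rw [hpre]
      exact pp.null_jump q u.toNNReal hupos
    have : ∀ᵐ u ∂ν, P ((fun ω => (ω, u)) ⁻¹' D₂) = 0 := by
      rw [hν, ae_restrict_iff' measurableSet_Ioc]
      exact Filter.Eventually.of_forall hz
    rw [lintegral_congr_ae (show (fun u : ℝ => P ((fun x => (x,u)) ⁻¹' D₂)) =ᵐ[ν] (fun _ => 0)
      from this), lintegral_zero]
  have hprodIoc : (P.prod ν) ((Set.univ : Set Ω) ×ˢ (Set.Ioc (0:ℝ) (T:ℝ))ᶜ) = 0 := by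
    rw [Measure.prod_prod]
    have : ν (Set.Ioc (0:ℝ) (T:ℝ))ᶜ = 0 := by
      rw [hν, Measure.restrict_apply (measurableSet_Ioc.compl)]
      simp
    rw [this, mul_zero]
  -- a.e. equality of F and F'
  have hae : ∀ᵐ z ∂(P.prod ν), F z.1 z.2 = F' z.1 z.2 := by
    have hsub : {z : Ω × ℝ | ¬ (F z.1 z.2 = F' z.1 z.2)}
        ⊆ (D₁ ×ˢ (Set.univ : Set ℝ)) ∪ D₂
          ∪ ((Set.univ : Set Ω) ×ˢ (Set.Ioc (0:ℝ) (T:ℝ))ᶜ) := by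
      intro z hz
      simp only [Set.mem_setOf_eq] at hz
      by_cases hu : z.2 ∈ Set.Ioc (0:ℝ) (T:ℝ)
      swap
      · exact Or.inr ⟨Set.mem_univ _, hu⟩
      refine Or.inl ?_
      obtain ⟨hu0, huT⟩ := hu
      set ω := z.1
      set u := z.2
      have hcoe : ((u.toNNReal : ℝ≥0) : ℝ) = u := Real.coe_toNNReal u hu0.le
      have hFz : F ω u = if u ≤ σ ω then (pp.N u.toNNReal ω : ℝ) else 0 := by
        rw [hF]
        simp [Set.indicator_apply]
      by_cases hN : pp.N u.toNNReal ω < q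
      · -- then F' = N, so F must be 0, so ¬ u ≤ σ ω; show ω ∈ D₁
        left
        have hF'z : F' ω u = (pp.N u.toNNReal ω : ℝ) := by rw [hF']; simp [hN]
        have hnle : ¬ u ≤ σ ω := by
          intro hle
          rw [hFz, if_pos hle, hF'z] at hz
          exact hz rfl
        refine ⟨?_, Set.mem_univ _⟩
        rw [hD₁, Set.mem_iInter]
        intro m
        by_contra hm
        have hm' : q ≤ pp.N (m : ℝ≥0) ω := not_lt.mp hm
        -- the hitting set is nonempty, so u ≤ hit
        have hhit : u.toNNReal ≤ pp.hit q ω := by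
          refine le_csInf ⟨(m : ℝ≥0), hm'⟩ ?_
          intro s hs
          by_contra hlt
          have hlt' : s < u.toNNReal := not_le.mp hlt
          have := lt_of_le_of_lt (le_trans hs (pp.mono ω hlt'.le)) hN
          exact lt_irrefl _ this
        have hT' : u.toNNReal ≤ T := Real.toNNReal_le_iff_le_coe.mpr huT
        have : u ≤ σ ω := by
          rw [hσ, ← hcoe]
          exact_mod_cast le_min hhit hT'
        exact hnle this
      · -- q ≤ N u; F' = 0, so F ≠ 0, so u ≤ σ ω; show z ∈ D₂
        right
        have hF'z : F' ω u = 0 := by rw [hF']; simp [hN]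
        have hle : u ≤ σ ω := by
          by_contra hnle
          rw [hFz, if_neg hnle, hF'z] at hz
          exact hz rfl
        have hhit : u.toNNReal ≤ pp.hit q ω := by
          have : u.toNNReal ≤ min (pp.hit q ω) T := by
            rw [hσ] at hle
            exact Real.toNNReal_le_iff_le_coe.mpr hle
          exact le_trans this (min_le_left _ _)
        rw [hD₂]
        refine ⟨not_lt.mp hN, ?_⟩
        intro r hr0 hru
        by_contra hge
        have hge' : q ≤ pp.N (Real.toNNReal (r:ℝ)) ω := not_lt.mp hge
        have : pp.hit q ω ≤ Real.toNNReal (r:ℝ) :=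
          csInf_le (OrderBot.bddBelow _) hge'
        have h2 : u.toNNReal ≤ Real.toNNReal (r:ℝ) := le_trans hhit this
        have h3 : u ≤ (r:ℝ) := by
          calc u = ((u.toNNReal : ℝ≥0) : ℝ) := hcoe.symm
            _ ≤ ((Real.toNNReal (r:ℝ) : ℝ≥0) : ℝ) := by exact_mod_cast h2
            _ = (r:ℝ) := Real.coe_toNNReal _ hr0
        exact absurd hru (not_lt.mpr h3)
    have hnull : (P.prod ν) {z : Ω × ℝ | ¬ (F z.1 z.2 = F' z.1 z.2)} = 0 := by
      refine measure_mono_null hsub ?_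
      refine measure_union_null (measure_union_null hprodD₁ hprodD₂) hprodIoc
    rw [Filter.eventually_iff, ← compl_compl {z : Ω × ℝ | F z.1 z.2 = F' z.1 z.2}]
    exact measure_mono_null (by intro z hz; exact hz) hnull |> fun h =>
      (compl_mem_ae_iff.mpr (by rw [Set.compl_setOf]; exact hnull))
  -- switch F to F' under the integrals
  have hswitch : ∫ ω, ∫ u, F ω u ∂ν ∂P = ∫ ω, ∫ u, F' ω u ∂ν ∂P :=
    integral_congr_ae ((MeasureTheory.Measure.ae_ae_of_ae_prod hae).mono
      fun ω h => integral_congr_ae h)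
  rw [hswitch]
  have hg : Measurable (fun n : ℕ => if n < q then (n:ℝ) else 0) := measurable_from_nat
  have hF'meas : Measurable (Function.uncurry F') := by
    have huncurry : Function.uncurry F' = (fun n : ℕ => if n < q then (n:ℝ) else 0)
        ∘ (fun z : Ω × ℝ => pp.N z.2.toNNReal z.1) := rfl
    rw [huncurry]; exact hg.comp hφ
  have hF'int : Integrable (Function.uncurry F') (P.prod ν) := by
    refine Integrable.mono' (integrable_const ((q:ℝ))) hF'meas.aestronglyMeasurable
      (Filter.Eventually.of_forall fun z => ?_)
    show ‖F' z.1 z.2‖ ≤ (q:ℝ)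
    rw [hF']
    by_cases h : pp.N z.2.toNNReal z.1 < q
    · simp only [if_pos h, Real.norm_natCast]
      exact_mod_cast h.le
    · simp only [if_neg h, norm_zero]
      positivity
  rw [integral_integral_swap hF'int]
  have hinner : ∀ u : ℝ, ∫ ω, F' ω u ∂P
      = ∑ n ∈ Finset.range q, poissonPMFReal (lam * u.toNNReal) n * (n:ℝ) := by
    intro u
    have hmap : ∫ ω, F' ω u ∂P
        = ∫ n, (if n < q then (n:ℝ) else 0) ∂(P.map (pp.N u.toNNReal)) :=
      (integral_map (pp.measurable_N _).aemeasurable hg.aestronglyMeasurable).symm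
    rw [hmap, pp.law, integral_poisson_trunc]
  rw [integral_congr_ae (Filter.Eventually.of_forall hinner)]
  -- now pure calculus
  obtain ⟨q', rfl⟩ : ∃ q', q = q' + 1 := ⟨q - 1, by omega⟩
  have hl : (0:ℝ) < (lam:ℝ) := by exact_mod_cast hlam
  have hcongr : Set.EqOn
      (fun u : ℝ => ∑ n ∈ Finset.range (q'+1), poissonPMFReal (lam * u.toNNReal) n * (n:ℝ))
      (fun u : ℝ => ∑ n ∈ Finset.range (q'+1), ptilde (lam:ℝ) n u * (n:ℝ))
      (Set.Ioc (0:ℝ) (T:ℝ)) := by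
    intro u hu
    refine Finset.sum_congr rfl fun n _ => ?_
    congr 1
    unfold ptilde poissonPMFReal
    have hco : ((lam * u.toNNReal : ℝ≥0):ℝ) = (lam:ℝ) * u := by
      rw [NNReal.coe_mul, Real.coe_toNNReal u hu.1.le]
    rw [hco]
  rw [hν, setIntegral_congr_fun measurableSet_Ioc hcongr,
    ftc_poisson (lam:ℝ) hl q' (T:ℝ) T.coe_nonneg, tsum_trunc (lam*T) (q'+1)]
  have hpt : ∀ n : ℕ, ptilde (lam:ℝ) n (T:ℝ) = poissonPMFReal (lam*T) n := by
    intro n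
    unfold ptilde poissonPMFReal
    rw [show ((lam*T : ℝ≥0):ℝ) = (lam:ℝ)*(T:ℝ) from NNReal.coe_mul _ _]
  rw [Finset.sum_congr rfl (fun n _ => by rw [hpt n] :
    ∀ n ∈ Finset.range (q'+1),
      (((n:ℝ)*((n:ℝ)-1) - ((q':ℝ)+1)*(q':ℝ)) * ptilde (lam:ℝ) n (T:ℝ))
      = (((n:ℝ)*((n:ℝ)-1) - ((q':ℝ)+1)*(q':ℝ)) * poissonPMFReal (lam*T) n))]
  congr 1
  push_cast
  ring_nf
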